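/- The minimum base mb(f) of a positive polynomial f satisfies H(f) ≤ mb(f) ≤ H(f) + 1, where H(f) is the maximum absolute value of the coefficients of f. -/

import Mathlib

def IsDigit (a : ℕ) (q : Polynomial ℤ) : Prop :=
  (∃ j : ℕ, j < a ∧ q = Polynomial.C (j : ℤ)) ∨
  (∃ j : ℕ, 1 ≤ j ∧ j ≤ a ∧ q = Polynomial.X - Polynomial.C (j : ℤ))

def IsBaseXRep (a : ℕ) (f : Polynomial ℤ) (m : ℕ) (d : ℕ → Polynomial ℤ) : Prop :=
  (∀ i, IsDigit a (d i)) ∧ d m ≠ 0 ∧ (∀ i, m < i → d i = 0) ∧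
  f = ∑ i ∈ Finset.range (m + 1), d i * Polynomial.X ^ i

/-- The minimum base of f: least positive a admitting a base-x representation. -/
noncomputable def mb (f : Polynomial ℤ) : ℕ :=
  sInf {a : ℕ | 0 < a ∧ ∃ m d, IsBaseXRep a f m d}

/-- The height of f: maximum absolute value of its coefficients. -/
def H (f : Polynomial ℤ) : ℕ := f.support.sup fun i => (f.coeff i).natAbs

open Polynomial

lemma natAbs_coeff_le (f : Polynomial ℤ) (n : ℕ) : (f.coeff n).natAbs ≤ H f := by
  by_cases h : n ∈ f.support
  · exact Finset.le_sup (f := fun i => (f.coeff i).natAbs) h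
  · rw [Polynomial.notMem_support_iff.mp h]
    exact Nat.zero_le _

lemma coeff_bounds (f : Polynomial ℤ) (n : ℕ) :
    -(H f : ℤ) ≤ f.coeff n ∧ f.coeff n ≤ H f := by
  have := natAbs_coeff_le f n
  omega

/-- The running value with carry in the greedy base-x representation. -/
noncomputable def vAux (f : Polynomial ℤ) : ℕ → ℤ
  | 0 => f.coeff 0
  | n+1 => f.coeff (n+1) - (if vAux f n < 0 then 1 else 0)

/-- The greedy digits. -/
noncomputable def dAux (f : Polynomial ℤ) (n : ℕ) : Polynomial ℤ :=
  if vAux f n < 0 then Polynomial.X - Polynomial.C (-(vAux f n)) else Polynomial.C (vAux f n)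

lemma vAux_bounds (f : Polynomial ℤ) (n : ℕ) :
    -(H f : ℤ) - 1 ≤ vAux f n ∧ vAux f n ≤ H f := by
  induction n with
  | zero => have := coeff_bounds f 0; simp [vAux]; omega
  | succ n ih =>
      have := coeff_bounds f (n+1)
      simp only [vAux]
      split_ifs <;> omega

lemma dAux_isDigit (f : Polynomial ℤ) (n : ℕ) : IsDigit (H f + 1) (dAux f n) := by
  have hb := vAux_bounds f n
  unfold dAux
  split_ifs with h
  · right
    refine ⟨(-(vAux f n)).toNat, by omega, by omega, ?_⟩
    congr 1
    rw [Int.toNat_of_nonneg (by omega)]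
  · left
    refine ⟨(vAux f n).toNat, by omega, ?_⟩
    rw [Int.toNat_of_nonneg (by omega)]

lemma dAux_sum (f : Polynomial ℤ) (n : ℕ) :
    ∑ i ∈ Finset.range (n+1), dAux f i * Polynomial.X ^ i
      = (∑ i ∈ Finset.range (n+1), Polynomial.C (f.coeff i) * Polynomial.X ^ i)
        + (if vAux f n < 0 then Polynomial.X ^ (n+1) else 0) := by
  induction n with
  | zero =>
      have h0 : vAux f 0 = f.coeff 0 := rfl
      simp only [zero_add, Finset.sum_range_one, dAux, pow_zero, mul_one, h0]
      split_ifs with h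
      · rw [map_neg]; ring
      · rw [add_zero]
  | succ n ih =>
      rw [Finset.sum_range_succ, ih]
      conv_rhs => rw [Finset.sum_range_succ]
      have hv : vAux f (n+1) = f.coeff (n+1) - (if vAux f n < 0 then 1 else 0) := rfl
      unfold dAux
      rw [hv]
      split_ifs <;> simp only [map_sub, map_neg, map_one, map_zero, sub_zero] <;> ring

lemma coeff_natDegree_pos (f : Polynomial ℤ) (hf : 0 < f.leadingCoeff) :
    0 < f.coeff f.natDegree := hf

lemma vAux_natDegree_nonneg (f : Polynomial ℤ) (hf : 0 < f.leadingCoeff) :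
    0 ≤ vAux f f.natDegree := by
  have h := coeff_natDegree_pos f hf
  cases hD : f.natDegree with
  | zero => rw [hD] at h; simpa [vAux] using h.le
  | succ n =>
      rw [hD] at h
      simp only [vAux]
      split_ifs <;> omega

lemma vAux_gt_degree (f : Polynomial ℤ) (hf : 0 < f.leadingCoeff) (k : ℕ) :
    0 ≤ vAux f (f.natDegree + k) ∧ (0 < k → vAux f (f.natDegree + k) = 0) := by
  induction k with
  | zero => simpa using vAux_natDegree_nonneg f hf
  | succ k ih =>
      have hc : f.coeff (f.natDegree + k + 1) = 0 :=
        Polynomial.coeff_eq_zero_of_natDegree_lt (by omega)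
      have : vAux f (f.natDegree + (k+1)) = 0 := by
        have : f.natDegree + (k+1) = (f.natDegree + k) + 1 := by omega
        rw [this]
        simp only [vAux]
        rw [if_neg (by omega), hc]
        ring
      exact ⟨this.ge, fun _ => this⟩

lemma dAux_gt_degree (f : Polynomial ℤ) (hf : 0 < f.leadingCoeff) (n : ℕ)
    (h : f.natDegree < n) : dAux f n = 0 := by
  have hv : vAux f n = 0 := by
    have := (vAux_gt_degree f hf (n - f.natDegree)).2 (by omega)
    rwa [show f.natDegree + (n - f.natDegree) = n by omega] at this
  simp [dAux, hv]

lemma dAux_sum_eq (f : Polynomial ℤ) (hf : 0 < f.leadingCoeff) :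
    ∑ i ∈ Finset.range (f.natDegree + 1), dAux f i * Polynomial.X ^ i = f := by
  rw [dAux_sum, if_neg (by have := vAux_natDegree_nonneg f hf; omega), add_zero]
  simp_rw [Polynomial.C_mul_X_pow_eq_monomial]
  exact (Polynomial.as_sum_range' f _ (Nat.lt_succ_self _)).symm

lemma exists_rep (f : Polynomial ℤ) (hf : 0 < f.leadingCoeff) :
    ∃ m d, IsBaseXRep (H f + 1) f m d := by
  classical
  have hf0 : f ≠ 0 := fun h => by simp [h] at hf
  have hsum := dAux_sum_eq f hf
  set D := f.natDegree with hD
  have hex : ∃ i, i ≤ D ∧ dAux f i ≠ 0 := by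
    by_contra hcon
    push_neg at hcon
    apply hf0
    rw [← hsum]
    refine Finset.sum_eq_zero fun i hi => ?_
    rw [hcon i (by simp at hi; omega), zero_mul]
  obtain ⟨i0, hi0D, hi0⟩ := hex
  set P : ℕ → Prop := fun i => dAux f i ≠ 0 with hP
  set m := Nat.findGreatest P D with hm
  have hPm : P m := Nat.findGreatest_spec hi0D hi0
  have hmD : m ≤ D := Nat.findGreatest_le D
  have hzero : ∀ i, m < i → dAux f i = 0 := by
    intro i hi
    by_cases hiD : i ≤ D
    · by_contra hne
      exact Nat.findGreatest_is_greatest hi hiD hne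
    · exact dAux_gt_degree f hf i (by omega)
  refine ⟨m, dAux f, fun i => dAux_isDigit f i, hPm, hzero, ?_⟩
  have hss : ∑ i ∈ Finset.range (m+1), dAux f i * Polynomial.X ^ i
      = ∑ i ∈ Finset.range (D+1), dAux f i * Polynomial.X ^ i := by
    apply Finset.sum_subset (Finset.range_subset_range.mpr (by omega))
    intro i _ hi
    rw [hzero i (by simp at hi; omega), zero_mul]
  rw [hss, hsum]

lemma height_le_of_rep (f : Polynomial ℤ) (a : ℕ) (ha : 0 < a) (m : ℕ)
    (d : ℕ → Polynomial ℤ) (h : IsBaseXRep a f m d) : H f ≤ a := by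
  obtain ⟨hdig, -, -, hsum⟩ := h
  have hdecomp : ∀ i, d i = Polynomial.C ((d i).coeff 0) + Polynomial.C ((d i).coeff 1) * Polynomial.X := by
    intro i
    rcases hdig i with ⟨j, _, hq⟩ | ⟨j, _, _, hq⟩ <;> simp [hq] <;> ring
  have hlo : ∀ i, -(a:ℤ) ≤ (d i).coeff 0 ∧ (d i).coeff 0 ≤ (a:ℤ) - 1 := by
    intro i
    rcases hdig i with ⟨j, hj, hq⟩ | ⟨j, hj1, hj2, hq⟩ <;> simp [hq] <;> omega
  have hhi : ∀ i, 0 ≤ (d i).coeff 1 ∧ (d i).coeff 1 ≤ 1 := by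
    intro i
    rcases hdig i with ⟨j, hj, hq⟩ | ⟨j, hj1, hj2, hq⟩ <;> simp [hq]
  have hcoeff : ∀ k, (f.coeff k).natAbs ≤ a := by
    intro k
    have hf2 : f = (∑ i ∈ Finset.range (m + 1), Polynomial.monomial i ((d i).coeff 0))
        + ∑ i ∈ Finset.range (m + 1), Polynomial.monomial (i+1) ((d i).coeff 1) := by
      rw [hsum, ← Finset.sum_add_distrib]
      refine Finset.sum_congr rfl fun i _ => ?_
      conv_lhs => rw [hdecomp i]
      rw [← Polynomial.C_mul_X_pow_eq_monomial, ← Polynomial.C_mul_X_pow_eq_monomial]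
      ring
    have hck : f.coeff k = (if k ∈ Finset.range (m+1) then (d k).coeff 0 else 0)
        + (∑ i ∈ Finset.range (m + 1), if i + 1 = k then (d i).coeff 1 else 0) := by
      rw [hf2]
      rw [Polynomial.coeff_add, Polynomial.finset_sum_coeff, Polynomial.finset_sum_coeff]
      congr 1
      · rw [← Finset.sum_ite_eq (Finset.range (m+1)) k (fun i => (d i).coeff 0)]
        refine Finset.sum_congr rfl fun i _ => ?_
        rw [Polynomial.coeff_monomial]
        simp [eq_comm]
      · refine Finset.sum_congr rfl fun i _ => ?_
        rw [Polynomial.coeff_monomial]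
    have hB : 0 ≤ (∑ i ∈ Finset.range (m + 1), if i + 1 = k then (d i).coeff 1 else 0) ∧
        (∑ i ∈ Finset.range (m + 1), if i + 1 = k then (d i).coeff 1 else 0) ≤ 1 := by
      rcases Nat.eq_zero_or_pos k with hk | hk
      · rw [Finset.sum_eq_zero (fun i _ => by rw [if_neg (by omega)])]
        omega
      · have : (∑ i ∈ Finset.range (m + 1), if i + 1 = k then (d i).coeff 1 else 0)
            = if k - 1 ∈ Finset.range (m+1) then (d (k-1)).coeff 1 else 0 := by
          rw [← Finset.sum_ite_eq (Finset.range (m+1)) (k-1) (fun i => (d i).coeff 1)]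
          refine Finset.sum_congr rfl fun i _ => ?_
          congr 1
          simp only [eq_iff_iff]
          omega
        rw [this]
        have := hhi (k-1)
        split_ifs <;> omega
    have hA := hlo k
    rw [hck]
    split_ifs with hcase <;> omega
  exact Finset.sup_le fun i _ => hcoeff i

/-- H(f) ≤ mb(f) ≤ H(f) + 1 for every positive polynomial f. -/
theorem height_le_minBase_le_height_succ (f : Polynomial ℤ) (hf : 0 < f.leadingCoeff) :
    H f ≤ mb f ∧ mb f ≤ H f + 1 := by
  have hmem : (H f + 1) ∈ {a : ℕ | 0 < a ∧ ∃ m d, IsBaseXRep a f m d} :=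
    ⟨Nat.succ_pos _, exists_rep f hf⟩
  constructor
  · have hmb : mb f ∈ {a : ℕ | 0 < a ∧ ∃ m d, IsBaseXRep a f m d} :=
      Nat.sInf_mem ⟨_, hmem⟩
    obtain ⟨ha, m, d, hrep⟩ := hmb
    exact height_le_of_rep f (mb f) ha m d hrep
  · exact Nat.sInf_le hmem
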